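/- Let π be a history-dependent randomized policy, s_0 ∈ S an initial state with μ(s_0) > 0, and z : ℕ → {0,…,M} a fixed delay sequence. Then for all t, t' ≥ t_z with the same effective decision time τ_t = τ_{t'}, for all s' ∈ S with P^π_z(s̃_{τ_t} = s', s̃_0 = s_0) > 0 and all a ∈ A: P^π_z(ã_t = a | s̃_{τ_t} = s', s̃_0 = s_0) = P^π_z(ã_{t'} = a | s̃_{τ_{t'}} = s', s̃_0 = s_0). In other words, the conditional law of the executed action given the state at the effective decision time and the initial state depends on the time index only through the effective decision time, so the Markov decision rule π'_{τ_t}(s')(a) := P^π_z(ã_t = a | s̃_{τ_t} = s', s̃_0 = s_0) is well defined. -/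

import Mathlib

open scoped ENNReal

/-! ## Stochastic execution-delay MDP with a fixed (observed) delay sequence

`S` and `A` are the finite state and action spaces, `P : S → A → PMF S` is the
transition kernel, `μ : PMF S` the initial distribution, `M ≥ 1` the delay bound,
`abar` the default action queue (only indices `< M` are ever used), and
`z : ℕ → {0,…,M}` a fixed delay sequence.  `P^π_z` denotes the process law with
these deterministic delays. -/

/-- Effective decision time `τ_t(z)`: the largest `t' ≤ t` with `t' + z t' ≤ t`. -/
def tau (z : ℕ → ℕ) (t : ℕ) : ℕ := Nat.findGreatest (fun t' => t' + z t' ≤ t) t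

theorem tau_le (z : ℕ → ℕ) (t : ℕ) : tau z t ≤ t := Nat.findGreatest_le t

/-- Switch time `t_z = min {z 0, 1 + z 1, …, (M-1) + z (M-1)}`. -/
noncomputable def switchTime (M : ℕ) (z : ℕ → ℕ) : ℕ := sInf {x | ∃ t' < M, t' + z t' = x}

/-- A history-dependent randomized policy (for a fixed, observed delay sequence):
at time `t` it maps the history `(s 0, …, s t, a 0, …, a (t-1))` to a distribution
over actions.  It is encoded on whole sequences, together with `IsCausal`. -/
def IsCausal {S A : Type*} (π : ℕ → (ℕ → S) → (ℕ → A) → PMF A) : Prop :=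
  ∀ (t : ℕ) (s s' : ℕ → S) (a a' : ℕ → A),
    (∀ i ≤ t, s i = s' i) → (∀ j < t, a j = a' j) → π t s a = π t s' a'

/-- The probability that the action executed at time `t` is `a t`, given the history:
if `t < min {z 0, 1 + z 1, …, t + z t}` the default action `abar t` is executed
deterministically; otherwise the action is drawn from `π (τ_t) (h (τ_t))`. -/
noncomputable def actProb {S A : Type*} [DecidableEq A] (abar : ℕ → A)
    (π : ℕ → (ℕ → S) → (ℕ → A) → PMF A) (z : ℕ → ℕ)
    (t : ℕ) (s : ℕ → S) (a : ℕ → A) : ℝ≥0∞ :=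
  if t < sInf {x | ∃ t' ≤ t, t' + z t' = x} then (if a t = abar t then 1 else 0)
  else π (tau z t) s a (a t)

/-- `P^π_z`-probability of the prefix `(s 0, a 0, …, s t, a t)`. -/
noncomputable def pathProb {S A : Type*} [DecidableEq A] (P : S → A → PMF S)
    (μ : PMF S) (abar : ℕ → A) (π : ℕ → (ℕ → S) → (ℕ → A) → PMF A) (z : ℕ → ℕ)
    (t : ℕ) (s : ℕ → S) (a : ℕ → A) : ℝ≥0∞ :=
  μ (s 0) * (∏ k ∈ Finset.range (t + 1), actProb abar π z k s a)
    * (∏ k ∈ Finset.range t, P (s k) (a k) (s (k + 1)))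

/-- Extension of a finite vector by a default value. -/
def ext {X : Type*} [Inhabited X] {n : ℕ} (v : Fin n → X) : ℕ → X :=
  fun i => if h : i < n then v ⟨i, h⟩ else default

open Classical in
/-- `P^π_z`-probability of an event `E` on `(s̃ 0, …, s̃ t, ã 0, …, ã t)`. -/
noncomputable def eventProb {S A : Type*} [Fintype S] [Inhabited S] [Fintype A]
    [DecidableEq A] [Inhabited A] (P : S → A → PMF S) (μ : PMF S)
    (abar : ℕ → A) (π : ℕ → (ℕ → S) → (ℕ → A) → PMF A) (z : ℕ → ℕ)
    (t : ℕ) (E : (Fin (t + 1) → S) → (Fin (t + 1) → A) → Prop) : ℝ≥0∞ :=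
  ∑ v : Fin (t + 1) → S, ∑ w : Fin (t + 1) → A,
    if E v w then pathProb P μ abar π z t (ext v) (ext w) else 0

section Aux

lemma sum_pmf {X : Type*} [Fintype X] (p : PMF X) : ∑ x, p x = 1 := by
  rw [← tsum_fintype (L := SummationFilter.unconditional _)]; exact p.tsum_coe

lemma ext_apply_lt {X : Type*} [Inhabited X] {n : ℕ} (v : Fin n → X) {i : ℕ} (h : i < n) :
    ext v i = v ⟨i, h⟩ := dif_pos h

lemma ext_snoc_lt {X : Type*} [Inhabited X] {n : ℕ} (v : Fin n → X) (x : X) {i : ℕ} (h : i < n) :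
    ext (Fin.snoc v x) i = ext v i := by
  rw [ext_apply_lt _ (Nat.lt_succ_of_lt h), ext_apply_lt _ h]
  simp [Fin.snoc, h]

lemma ext_snoc_self {X : Type*} [Inhabited X] {n : ℕ} (v : Fin n → X) (x : X) :
    ext (Fin.snoc v x) n = x := by
  rw [ext_apply_lt _ (Nat.lt_succ_self n)]
  simp [Fin.snoc]

lemma sum_snoc {X M : Type*} [Fintype X] [AddCommMonoid M] (n : ℕ) (f : (Fin (n+1) → X) → M) :
    ∑ v : Fin (n+1) → X, f v = ∑ v' : Fin n → X, ∑ x : X, f (Fin.snoc v' x) := by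
  rw [show (∑ v' : Fin n → X, ∑ x : X, f (Fin.snoc v' x))
      = ∑ q : (Fin n → X) × X, f (Fin.snoc q.1 q.2) from
      (Fintype.sum_prod_type (f := fun q => f (Fin.snoc q.1 q.2))).symm]
  exact (Fintype.sum_equiv
    ((Fin.insertNthEquiv (fun _ => X) (Fin.last n)).symm.trans (Equiv.prodComm _ _)) _ _
    (fun w => by
      simp only [Equiv.trans_apply, Equiv.prodComm_apply, Fin.insertNthEquiv_symm_apply,
        Prod.swap]
      congr 1
      rw [Fin.removeNth_last]; exact (Fin.snoc_init_self w).symm))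

variable {S A : Type*}

lemma actProb_congr [DecidableEq A] (abar : ℕ → A) {π : ℕ → (ℕ → S) → (ℕ → A) → PMF A}
    (hπ : IsCausal π) (z : ℕ → ℕ) (k : ℕ) {s s' : ℕ → S} {a a' : ℕ → A}
    (hs : ∀ i ≤ k, s i = s' i) (ha : ∀ j ≤ k, a j = a' j) :
    actProb abar π z k s a = actProb abar π z k s' a' := by
  unfold actProb
  rw [ha k le_rfl,
    hπ (tau z k) s s' a a' (fun i hi => hs i (hi.trans (tau_le z k)))
      (fun j hj => ha j (hj.le.trans (tau_le z k)))]

lemma sum_actProb_snoc [Fintype A] [DecidableEq A] [Inhabited A] (abar : ℕ → A)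
    {π : ℕ → (ℕ → S) → (ℕ → A) → PMF A} (hπ : IsCausal π) (z : ℕ → ℕ) (n : ℕ)
    (s : ℕ → S) (w' : Fin n → A) :
    ∑ y : A, actProb abar π z n s (ext (Fin.snoc w' y)) = 1 := by
  unfold actProb
  by_cases h : n < sInf {x | ∃ t' ≤ n, t' + z t' = x}
  · simp only [if_pos h, ext_snoc_self]
    simp
  · simp only [if_neg h, ext_snoc_self]
    have hc : ∀ y : A, π (tau z n) s (ext (Fin.snoc w' y)) = π (tau z n) s (ext w') :=
      fun y => hπ _ s s _ _ (fun _ _ => rfl)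
        (fun j hj => ext_snoc_lt w' y (lt_of_lt_of_le hj (tau_le z n)))
    simp only [hc]
    exact sum_pmf _

end Aux

open Classical in
noncomputable def Hval {S A : Type*} [Fintype S] [Inhabited S] [Fintype A] [DecidableEq A]
    [Inhabited A] (P : S → A → PMF S) (μ : PMF S) (abar : ℕ → A)
    (π : ℕ → (ℕ → S) → (ℕ → A) → PMF A) (z : ℕ → ℕ) (τ : ℕ) (s0 s' : S)
    (g : (ℕ → S) → (ℕ → A) → ℝ≥0∞) (n : ℕ) : ℝ≥0∞ :=
  ∑ v : Fin (n + 1) → S, ∑ w : Fin n → A,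
    (if ext v τ = s' ∧ ext v 0 = s0 then
      μ (ext v 0) * (∏ k ∈ Finset.range n, actProb abar π z k (ext v) (ext w)) *
        (∏ k ∈ Finset.range n, P (ext v k) (ext w k) (ext v (k + 1))) * g (ext v) (ext w)
    else 0)

section Main
variable {S A : Type*} [Fintype S] [Inhabited S] [Fintype A] [DecidableEq A] [Inhabited A]

open Classical in
lemma term_eq (P : S → A → PMF S) (μ : PMF S) (abar : ℕ → A)
    {π : ℕ → (ℕ → S) → (ℕ → A) → PMF A} (z : ℕ → ℕ) (τ : ℕ) (s0 s' : S)
    {g : (ℕ → S) → (ℕ → A) → ℝ≥0∞} (hπ : IsCausal π)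
    (hg : ∀ (s s₂ : ℕ → S) (b b₂ : ℕ → A),
      (∀ i ≤ τ, s i = s₂ i) → (∀ j < τ, b j = b₂ j) → g s b = g s₂ b₂)
    {n : ℕ} (hn : τ ≤ n) (v' : Fin (n + 1) → S) (w' : Fin n → A) (x : S) (y : A) :
    (if ext (Fin.snoc v' x) τ = s' ∧ ext (Fin.snoc v' x) 0 = s0 then
      μ (ext (Fin.snoc v' x) 0) *
        (∏ k ∈ Finset.range (n + 1),
          actProb abar π z k (ext (Fin.snoc v' x)) (ext (Fin.snoc w' y))) *
        (∏ k ∈ Finset.range (n + 1),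
          P (ext (Fin.snoc v' x) k) (ext (Fin.snoc w' y) k) (ext (Fin.snoc v' x) (k + 1))) *
        g (ext (Fin.snoc v' x)) (ext (Fin.snoc w' y))
     else 0)
    = (if ext v' τ = s' ∧ ext v' 0 = s0 then
        μ (ext v' 0) * (∏ k ∈ Finset.range n, actProb abar π z k (ext v') (ext w')) *
          (∏ k ∈ Finset.range n, P (ext v' k) (ext w' k) (ext v' (k + 1))) *
          g (ext v') (ext w')
       else 0) * actProb abar π z n (ext v') (ext (Fin.snoc w' y)) * P (ext v' n) y x := by
  rw [ext_snoc_lt v' x (lt_of_le_of_lt hn (Nat.lt_succ_self n)),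
    ext_snoc_lt v' x (Nat.succ_pos n)]
  by_cases hC : ext v' τ = s' ∧ ext v' 0 = s0
  · rw [if_pos hC, if_pos hC, Finset.prod_range_succ, Finset.prod_range_succ]
    have h1 : ∀ k ∈ Finset.range n,
        actProb abar π z k (ext (Fin.snoc v' x)) (ext (Fin.snoc w' y))
          = actProb abar π z k (ext v') (ext w') := by
      intro k hk
      have hk' := Finset.mem_range.1 hk
      exact actProb_congr abar hπ z k
        (fun i hi => ext_snoc_lt v' x (Nat.lt_succ_of_lt (lt_of_le_of_lt hi hk')))
        (fun j hj => ext_snoc_lt w' y (lt_of_le_of_lt hj hk'))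
    have h2 : actProb abar π z n (ext (Fin.snoc v' x)) (ext (Fin.snoc w' y))
        = actProb abar π z n (ext v') (ext (Fin.snoc w' y)) :=
      actProb_congr abar hπ z n
        (fun i hi => ext_snoc_lt v' x (Nat.lt_succ_of_le hi)) (fun _ _ => rfl)
    have h3 : ∀ k ∈ Finset.range n,
        P (ext (Fin.snoc v' x) k) (ext (Fin.snoc w' y) k) (ext (Fin.snoc v' x) (k + 1))
          = P (ext v' k) (ext w' k) (ext v' (k + 1)) := by
      intro k hk
      have hk' := Finset.mem_range.1 hk
      rw [ext_snoc_lt v' x (Nat.lt_succ_of_lt hk'), ext_snoc_lt w' y hk',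
        ext_snoc_lt v' x (Nat.succ_lt_succ hk')]
    have h4 : P (ext (Fin.snoc v' x) n) (ext (Fin.snoc w' y) n) (ext (Fin.snoc v' x) (n + 1))
        = P (ext v' n) y x := by
      rw [ext_snoc_lt v' x (Nat.lt_succ_self n), ext_snoc_self w' y, ext_snoc_self v' x]
    have h5 : g (ext (Fin.snoc v' x)) (ext (Fin.snoc w' y)) = g (ext v') (ext w') :=
      hg _ _ _ _
        (fun i hi => ext_snoc_lt v' x (Nat.lt_succ_of_le (hi.trans hn)))
        (fun j hj => ext_snoc_lt w' y (lt_of_lt_of_le hj hn))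
    rw [Finset.prod_congr rfl h1, Finset.prod_congr rfl h3, h2, h4, h5]
    ring
  · rw [if_neg hC, if_neg hC, zero_mul, zero_mul]

lemma Hval_succ (P : S → A → PMF S) (μ : PMF S) (abar : ℕ → A)
    {π : ℕ → (ℕ → S) → (ℕ → A) → PMF A} (z : ℕ → ℕ) (τ : ℕ) (s0 s' : S)
    {g : (ℕ → S) → (ℕ → A) → ℝ≥0∞} (hπ : IsCausal π)
    (hg : ∀ (s s₂ : ℕ → S) (b b₂ : ℕ → A),
      (∀ i ≤ τ, s i = s₂ i) → (∀ j < τ, b j = b₂ j) → g s b = g s₂ b₂)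
    {n : ℕ} (hn : τ ≤ n) :
    Hval P μ abar π z τ s0 s' g (n + 1) = Hval P μ abar π z τ s0 s' g n := by
  unfold Hval
  rw [sum_snoc]
  refine Finset.sum_congr rfl fun v' _ => ?_
  rw [Finset.sum_congr rfl fun x _ => sum_snoc n _, Finset.sum_comm]
  refine Finset.sum_congr rfl fun w' _ => ?_
  simp only [term_eq P μ abar z τ s0 s' hπ hg hn v' w']
  rw [Finset.sum_comm]
  simp only [← Finset.mul_sum]
  simp only [sum_pmf, mul_one]
  rw [← Finset.mul_sum, sum_actProb_snoc abar hπ z n (ext v') w', mul_one]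

lemma Hval_eq (P : S → A → PMF S) (μ : PMF S) (abar : ℕ → A)
    {π : ℕ → (ℕ → S) → (ℕ → A) → PMF A} (z : ℕ → ℕ) (τ : ℕ) (s0 s' : S)
    {g : (ℕ → S) → (ℕ → A) → ℝ≥0∞} (hπ : IsCausal π)
    (hg : ∀ (s s₂ : ℕ → S) (b b₂ : ℕ → A),
      (∀ i ≤ τ, s i = s₂ i) → (∀ j < τ, b j = b₂ j) → g s b = g s₂ b₂)
    {n : ℕ} (hn : τ ≤ n) :
    Hval P μ abar π z τ s0 s' g n = Hval P μ abar π z τ s0 s' g τ := by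
  induction n, hn using Nat.le_induction with
  | base => rfl
  | succ m hm ih => rw [Hval_succ P μ abar z τ s0 s' hπ hg hm, ih]

end Main

section Main2
variable {S A : Type*} [Fintype S] [Inhabited S] [Fintype A] [DecidableEq A] [Inhabited A]

lemma ite_and_shift {M : Type*} [Zero M] (C1 Q C2 : Prop) [Decidable C1] [Decidable Q]
    [Decidable C2] [Decidable (C1 ∧ Q ∧ C2)] [Decidable (C1 ∧ C2)] (x : M) :
    (if C1 ∧ Q ∧ C2 then x else 0) = if Q then (if C1 ∧ C2 then x else 0) else 0 := by
  by_cases h1 : C1 <;> by_cases hq : Q <;> by_cases h2 : C2 <;> simp [h1, hq, h2]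

open Classical in
lemma num_term (P : S → A → PMF S) (μ : PMF S) (abar : ℕ → A)
    {π : ℕ → (ℕ → S) → (ℕ → A) → PMF A} (hπ : IsCausal π) (z : ℕ → ℕ) (t : ℕ)
    (hinf : sInf {x | ∃ t' ≤ t, t' + z t' = x} ≤ t) (s0 s' : S) (a : A)
    (v : Fin (t + 1) → S) (w' : Fin t → A) :
    (if ext v (tau z t) = s' ∧ ext v 0 = s0 then
        pathProb P μ abar π z t (ext v) (ext (Fin.snoc w' a)) else 0)
    = (if ext v (tau z t) = s' ∧ ext v 0 = s0 then
        μ (ext v 0) * (∏ k ∈ Finset.range t, actProb abar π z k (ext v) (ext w')) *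
          (∏ k ∈ Finset.range t, P (ext v k) (ext w' k) (ext v (k + 1))) *
          π (tau z t) (ext v) (ext w') a
       else 0) := by
  by_cases hC : ext v (tau z t) = s' ∧ ext v 0 = s0
  · rw [if_pos hC, if_pos hC]
    unfold pathProb
    rw [Finset.prod_range_succ]
    have h1 : ∀ k ∈ Finset.range t,
        actProb abar π z k (ext v) (ext (Fin.snoc w' a))
          = actProb abar π z k (ext v) (ext w') := by
      intro k hk
      exact actProb_congr abar hπ z k (fun _ _ => rfl)
        (fun j hj => ext_snoc_lt w' a (lt_of_le_of_lt hj (Finset.mem_range.1 hk)))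
    have h2 : actProb abar π z t (ext v) (ext (Fin.snoc w' a))
        = π (tau z t) (ext v) (ext w') a := by
      unfold actProb
      rw [if_neg (Nat.not_lt.2 hinf), ext_snoc_self,
        hπ (tau z t) (ext v) (ext v) _ _ (fun _ _ => rfl)
          (fun j hj => ext_snoc_lt w' a (lt_of_lt_of_le hj (tau_le z t)))]
    have h3 : ∀ k ∈ Finset.range t,
        P (ext v k) (ext (Fin.snoc w' a) k) (ext v (k + 1))
          = P (ext v k) (ext w' k) (ext v (k + 1)) := by
      intro k hk
      rw [ext_snoc_lt w' a (Finset.mem_range.1 hk)]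
    rw [Finset.prod_congr rfl h1, Finset.prod_congr rfl h3, h2]
    ring
  · rw [if_neg hC, if_neg hC]

open Classical in
lemma den_term (P : S → A → PMF S) (μ : PMF S) (abar : ℕ → A)
    {π : ℕ → (ℕ → S) → (ℕ → A) → PMF A} (hπ : IsCausal π) (z : ℕ → ℕ) (t : ℕ)
    (s0 s' : S) (v : Fin (t + 1) → S) (w' : Fin t → A) (y : A) :
    (if ext v (tau z t) = s' ∧ ext v 0 = s0 then
        pathProb P μ abar π z t (ext v) (ext (Fin.snoc w' y)) else 0)
    = (if ext v (tau z t) = s' ∧ ext v 0 = s0 then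
        μ (ext v 0) * (∏ k ∈ Finset.range t, actProb abar π z k (ext v) (ext w')) *
          (∏ k ∈ Finset.range t, P (ext v k) (ext w' k) (ext v (k + 1))) * (1 : ℝ≥0∞)
       else 0) * actProb abar π z t (ext v) (ext (Fin.snoc w' y)) := by
  by_cases hC : ext v (tau z t) = s' ∧ ext v 0 = s0
  · rw [if_pos hC, if_pos hC]
    unfold pathProb
    rw [Finset.prod_range_succ]
    have h1 : ∀ k ∈ Finset.range t,
        actProb abar π z k (ext v) (ext (Fin.snoc w' y))
          = actProb abar π z k (ext v) (ext w') := by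
      intro k hk
      exact actProb_congr abar hπ z k (fun _ _ => rfl)
        (fun j hj => ext_snoc_lt w' y (lt_of_le_of_lt hj (Finset.mem_range.1 hk)))
    have h3 : ∀ k ∈ Finset.range t,
        P (ext v k) (ext (Fin.snoc w' y) k) (ext v (k + 1))
          = P (ext v k) (ext w' k) (ext v (k + 1)) := by
      intro k hk
      rw [ext_snoc_lt w' y (Finset.mem_range.1 hk)]
    rw [Finset.prod_congr rfl h1, Finset.prod_congr rfl h3]
    ring
  · rw [if_neg hC, if_neg hC, zero_mul]

open Classical in
lemma eventProb_num (P : S → A → PMF S) (μ : PMF S) (abar : ℕ → A)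
    {π : ℕ → (ℕ → S) → (ℕ → A) → PMF A} (hπ : IsCausal π) (z : ℕ → ℕ) (t : ℕ)
    (hinf : sInf {x | ∃ t' ≤ t, t' + z t' = x} ≤ t) (s0 s' : S) (a : A) :
    eventProb P μ abar π z t (fun v w =>
        v ⟨tau z t, Nat.lt_succ_of_le (tau_le z t)⟩ = s' ∧ w (Fin.last t) = a ∧ v 0 = s0)
      = Hval P μ abar π z (tau z t) s0 s' (fun s b => π (tau z t) s b a) t := by
  unfold eventProb Hval
  refine Finset.sum_congr rfl fun v _ => ?_
  have hv : v ⟨tau z t, Nat.lt_succ_of_le (tau_le z t)⟩ = ext v (tau z t) :=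
    (ext_apply_lt v _).symm
  have hv0 : v 0 = ext v 0 := by
    rw [ext_apply_lt v (Nat.succ_pos t)]
    exact congrArg v (Fin.ext (by simp))
  simp only [hv, hv0]
  rw [sum_snoc]
  refine Finset.sum_congr rfl fun w' _ => ?_
  simp only [Fin.snoc_last]
  rw [Finset.sum_congr rfl fun y _ => ite_and_shift _ _ _ _,
    Finset.sum_ite_eq' Finset.univ a, if_pos (Finset.mem_univ a)]
  exact num_term P μ abar hπ z t hinf s0 s' a v w'

open Classical in
lemma eventProb_den (P : S → A → PMF S) (μ : PMF S) (abar : ℕ → A)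
    {π : ℕ → (ℕ → S) → (ℕ → A) → PMF A} (hπ : IsCausal π) (z : ℕ → ℕ) (t : ℕ)
    (s0 s' : S) :
    eventProb P μ abar π z t (fun v _ =>
        v ⟨tau z t, Nat.lt_succ_of_le (tau_le z t)⟩ = s' ∧ v 0 = s0)
      = Hval P μ abar π z (tau z t) s0 s' (fun _ _ => (1 : ℝ≥0∞)) t := by
  unfold eventProb Hval
  refine Finset.sum_congr rfl fun v _ => ?_
  have hv : v ⟨tau z t, Nat.lt_succ_of_le (tau_le z t)⟩ = ext v (tau z t) :=
    (ext_apply_lt v _).symm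
  have hv0 : v 0 = ext v 0 := by
    rw [ext_apply_lt v (Nat.succ_pos t)]
    exact congrArg v (Fin.ext (by simp))
  simp only [hv, hv0]
  rw [sum_snoc]
  refine Finset.sum_congr rfl fun w' _ => ?_
  rw [Finset.sum_congr rfl fun y _ => den_term P μ abar hπ z t s0 s' v w' y,
    ← Finset.mul_sum, sum_actProb_snoc abar hπ z t (ext v) w', mul_one]

end Main2

/-- Let `π` be a history-dependent randomized policy, `s0` an initial
state with `μ s0 > 0`, and `z` a fixed delay sequence.  Then for all `t, t' ≥ t_z`
with the same effective decision time `τ_t = τ_{t'}`, all `s' : S` with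
`P^π_z(s̃ τ_t = s', s̃ 0 = s0) > 0`, and all `a : A`:
`P^π_z(ã t = a | s̃ τ_t = s', s̃ 0 = s0) = P^π_z(ã t' = a | s̃ τ_{t'} = s', s̃ 0 = s0)`.
Hence the Markov decision rule `π'_{τ_t}(s')(a) := P^π_z(ã t = a | s̃ τ_t = s', s̃ 0 = s0)`
is well defined. -/
theorem statement9 {S A : Type*} [Fintype S] [Inhabited S] [Fintype A]
    [DecidableEq A] [Inhabited A]
    (P : S → A → PMF S) (μ : PMF S) (M : ℕ) (hM : 1 ≤ M) (abar : ℕ → A)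
    (z : ℕ → ℕ) (hz : ∀ i, z i ≤ M)
    (π : ℕ → (ℕ → S) → (ℕ → A) → PMF A) (hπ : IsCausal π)
    (s0 : S) (hs0 : 0 < μ s0)
    (t t' : ℕ) (ht : switchTime M z ≤ t) (ht' : switchTime M z ≤ t')
    (hτ : tau z t = tau z t') (s' : S)
    (hpos : 0 < eventProb P μ abar π z t (fun v _ =>
        v ⟨tau z t, Nat.lt_succ_of_le (tau_le z t)⟩ = s' ∧ v 0 = s0))
    (a : A) :
    eventProb P μ abar π z t (fun v w =>
        v ⟨tau z t, Nat.lt_succ_of_le (tau_le z t)⟩ = s' ∧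
          w (Fin.last t) = a ∧ v 0 = s0)
      / eventProb P μ abar π z t (fun v _ =>
        v ⟨tau z t, Nat.lt_succ_of_le (tau_le z t)⟩ = s' ∧ v 0 = s0)
    = eventProb P μ abar π z t' (fun v w =>
        v ⟨tau z t', Nat.lt_succ_of_le (tau_le z t')⟩ = s' ∧
          w (Fin.last t') = a ∧ v 0 = s0)
      / eventProb P μ abar π z t' (fun v _ =>
        v ⟨tau z t', Nat.lt_succ_of_le (tau_le z t')⟩ = s' ∧ v 0 = s0) := by
  have key : ∀ u : ℕ, switchTime M z ≤ u → sInf {x | ∃ k ≤ u, k + z k = x} ≤ u := by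
    intro u hu
    have hne : switchTime M z ∈ {x | ∃ t'' < M, t'' + z t'' = x} :=
      Nat.sInf_mem ⟨z 0, 0, hM, by simp⟩
    obtain ⟨k, hkM, hk⟩ := hne
    have hkz : k + z k ≤ u := le_trans (le_of_eq hk) hu
    have hk1 : k ≤ u := le_trans (Nat.le_add_right k (z k)) hkz
    exact le_trans (Nat.sInf_le ⟨k, hk1, rfl⟩) hkz
  have hτt : tau z t ≤ t := tau_le z t
  have hτt' : tau z t ≤ t' := hτ ▸ tau_le z t'
  have hgnum : ∀ (s s₂ : ℕ → S) (b b₂ : ℕ → A), (∀ i ≤ tau z t, s i = s₂ i) →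
      (∀ j < tau z t, b j = b₂ j) → π (tau z t) s b a = π (tau z t) s₂ b₂ a :=
    fun s s₂ b b₂ hs hb => by rw [hπ (tau z t) s s₂ b b₂ hs hb]
  have hgden : ∀ (s s₂ : ℕ → S) (b b₂ : ℕ → A), (∀ i ≤ tau z t, s i = s₂ i) →
      (∀ j < tau z t, b j = b₂ j) → (1 : ℝ≥0∞) = 1 := fun _ _ _ _ _ _ => rfl
  rw [eventProb_num P μ abar hπ z t (key t ht) s0 s' a,
    eventProb_den P μ abar hπ z t s0 s',
    eventProb_num P μ abar hπ z t' (key t' ht') s0 s' a,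
    eventProb_den P μ abar hπ z t' s0 s', ← hτ,
    Hval_eq P μ abar z (tau z t) s0 s' hπ hgnum hτt,
    Hval_eq P μ abar z (tau z t) s0 s' hπ hgden hτt,
    Hval_eq P μ abar z (tau z t) s0 s' hπ hgnum hτt',
    Hval_eq P μ abar z (tau z t) s0 s' hπ hgden hτt']
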